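/- Consider F(v¹,v²) = (1/2)(v¹)²v² + v¹e^{v²} + (1/2)(v¹)²log v¹ on the domain v¹ > 0, with η the 2×2 matrix with η_{12} = η_{21} = 1 and η_{11} = η_{22} = 0. Define c^1_{βγ} = ∂_2∂_β∂_γ F and c^2_{βγ} = ∂_1∂_β∂_γ F. Then on the domain where additionally v¹ ≠ e^{v²}, the vector field e with components e¹ = v¹/(v¹ − e^{v²}), e² = −1/(v¹ − e^{v²}) is the unit of the multiplication: e^γ c^α_{γβ} = δ^α_β for all α, β ∈ {1,2}. -/

import Mathlib

/-- Partial derivative in the first variable. -/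
noncomputable def D1 (f : ℝ → ℝ → ℝ) : ℝ → ℝ → ℝ := fun x y => deriv (fun x' => f x' y) x

/-- Partial derivative in the second variable. -/
noncomputable def D2 (f : ℝ → ℝ → ℝ) : ℝ → ℝ → ℝ := fun x y => deriv (fun y' => f x y') y

/-- Partial derivative in the `i`-th variable, `i : Fin 2`. -/
noncomputable def Dv (i : Fin 2) : (ℝ → ℝ → ℝ) → (ℝ → ℝ → ℝ) := if i = 0 then D1 else D2

/-- The potential `F = (1/2)(v¹)²v² + v¹e^{v²} + (1/2)(v¹)²log v¹` of the 2-dimensional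
generalized Frobenius manifold associated with the Ablowitz–Ladik hierarchy. -/
noncomputable def FAL (a b : ℝ) : ℝ :=
  (1 / 2) * a ^ 2 * b + a * Real.exp b + (1 / 2) * a ^ 2 * Real.log a

/-- The index swap `1 ↔ 2` implementing the off-diagonal metric `η` (`η^{12} = η^{21} = 1`). -/
def swapIdx (i : Fin 2) : Fin 2 := if i = 0 then 1 else 0

/-- Structure constants `c^γ_{αβ} = η^{γε}∂_α∂_β∂_ε F` of the Ablowitz–Ladik generalized
Frobenius manifold. -/
noncomputable def cAL (γ α β : Fin 2) : ℝ → ℝ → ℝ := Dv α (Dv β (Dv (swapIdx γ) FAL))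

/-- The (non-flat) unit vector field `e = (v¹∂₁ − ∂₂)/(v¹ − e^{v²})`. -/
noncomputable def eAL (γ : Fin 2) (a b : ℝ) : ℝ :=
  if γ = 0 then a / (a - Real.exp b) else -1 / (a - Real.exp b)

/-- The Euler vector field `E = v¹∂₁ + ∂₂`. -/
noncomputable def EAL (γ : Fin 2) (a b : ℝ) : ℝ := if γ = 0 then a else 1

lemma d1F (a b : ℝ) (ha : 0 < a) :
    D1 FAL a b = a * b + Real.exp b + a * Real.log a + a / 2 := by
  unfold D1 FAL
  have h : HasDerivAt (fun x : ℝ => (1 / 2) * x ^ 2 * b + x * Real.exp b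
      + (1 / 2) * x ^ 2 * Real.log x)
      (a * b + Real.exp b + (a * Real.log a + a / 2)) a := by
    have h1 : HasDerivAt (fun x : ℝ => (1 / 2) * x ^ 2 * b) (a * b) a := by
      have := ((hasDerivAt_pow 2 a).const_mul (1 / 2 : ℝ)).mul_const b
      exact this.congr_deriv (by ring)
    have h2 : HasDerivAt (fun x : ℝ => x * Real.exp b) (Real.exp b) a := by
      simpa using (hasDerivAt_id a).mul_const (Real.exp b)
    have h3 : HasDerivAt (fun x : ℝ => (1 / 2) * x ^ 2 * Real.log x)
        (a * Real.log a + a / 2) a := by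
      have := (((hasDerivAt_pow 2 a).const_mul (1 / 2 : ℝ)).mul (Real.hasDerivAt_log ha.ne'))
      exact this.congr_deriv (by field_simp; ring)
    exact (h1.add h2).add h3
  rw [h.deriv]; ring

lemma d2F (a b : ℝ) : D2 FAL a b = (1 / 2) * a ^ 2 + a * Real.exp b := by
  unfold D2 FAL
  have h : HasDerivAt (fun y : ℝ => (1 / 2) * a ^ 2 * y + a * Real.exp y
      + (1 / 2) * a ^ 2 * Real.log a) ((1 / 2) * a ^ 2 + a * Real.exp b) b := by
    have h1 : HasDerivAt (fun y : ℝ => (1 / 2) * a ^ 2 * y) ((1 / 2) * a ^ 2) b := by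
      simpa using (hasDerivAt_id b).const_mul ((1 / 2) * a ^ 2)
    have h2 : HasDerivAt (fun y : ℝ => a * Real.exp y) (a * Real.exp b) b :=
      (Real.hasDerivAt_exp b).const_mul a
    simpa using (h1.add h2).add_const ((1 / 2) * a ^ 2 * Real.log a)
  rw [h.deriv]

-- second level on D2 F (global)
lemma d12 (a b : ℝ) : D1 (D2 FAL) a b = a + Real.exp b := by
  show deriv (fun x => D2 FAL x b) a = _
  have : (fun x => D2 FAL x b) = fun x => (1 / 2) * x ^ 2 + x * Real.exp b := by
    funext x; exact d2F x b
  rw [this]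
  have h : HasDerivAt (fun x : ℝ => (1 / 2) * x ^ 2 + x * Real.exp b) (a + Real.exp b) a := by
    have h1 : HasDerivAt (fun x : ℝ => (1 / 2) * x ^ 2) a a := by
      have := (hasDerivAt_pow 2 a).const_mul (1 / 2 : ℝ)
      exact this.congr_deriv (by ring)
    have h2 : HasDerivAt (fun x : ℝ => x * Real.exp b) (Real.exp b) a := by
      simpa using (hasDerivAt_id a).mul_const (Real.exp b)
    exact h1.add h2
  rw [h.deriv]

lemma d22 (a b : ℝ) : D2 (D2 FAL) a b = a * Real.exp b := by
  show deriv (fun y => D2 FAL a y) b = _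
  have : (fun y => D2 FAL a y) = fun y => (1 / 2) * a ^ 2 + a * Real.exp y := by
    funext y; exact d2F a y
  rw [this]
  have h : HasDerivAt (fun y : ℝ => (1 / 2) * a ^ 2 + a * Real.exp y) (a * Real.exp b) b := by
    simpa using ((Real.hasDerivAt_exp b).const_mul a).const_add ((1 / 2) * a ^ 2)
  rw [h.deriv]

-- second level on D1 F (needs a > 0)
lemma d11 (a b : ℝ) (ha : 0 < a) : D1 (D1 FAL) a b = b + Real.log a + 3 / 2 := by
  show deriv (fun x => D1 FAL x b) a = _
  have hev : (fun x => D1 FAL x b) =ᶠ[nhds a]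
      (fun x => x * b + Real.exp b + x * Real.log x + x / 2) := by
    filter_upwards [eventually_gt_nhds ha] with x hx using d1F x b hx
  rw [show deriv (fun x => D1 FAL x b) a = deriv (fun x => x * b + Real.exp b + x * Real.log x + x / 2) a from hev.deriv_eq]
  have h : HasDerivAt (fun x : ℝ => x * b + Real.exp b + x * Real.log x + x / 2)
      (b + Real.log a + 3 / 2) a := by
    have h1 : HasDerivAt (fun x : ℝ => x * b) b a := by simpa using (hasDerivAt_id a).mul_const b
    have h3 : HasDerivAt (fun x : ℝ => x * Real.log x) (Real.log a + 1) a := by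
      have := (hasDerivAt_id a).mul (Real.hasDerivAt_log ha.ne')
      exact this.congr_deriv (by simp [ha.ne'])
    have h4 : HasDerivAt (fun x : ℝ => x / 2) (1 / 2) a := by
      simpa using (hasDerivAt_id a).div_const 2
    have := ((h1.add_const (Real.exp b)).add h3).add h4
    exact this.congr_deriv (by ring)
  rw [h.deriv]

lemma d21 (a b : ℝ) (ha : 0 < a) : D2 (D1 FAL) a b = a + Real.exp b := by
  show deriv (fun y => D1 FAL a y) b = _
  have : (fun y => D1 FAL a y) = fun y => a * y + Real.exp y + a * Real.log a + a / 2 := by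
    funext y; exact d1F a y ha
  rw [this]
  have h : HasDerivAt (fun y : ℝ => a * y + Real.exp y + a * Real.log a + a / 2)
      (a + Real.exp b) b := by
    simpa using ((((hasDerivAt_id b).const_mul a).add (Real.hasDerivAt_exp b)).add_const
      (a * Real.log a)).add_const (a / 2)
  rw [h.deriv]

-- third level: c^1 components (swap 0 = 1, inner = D2 F)
lemma c1_00 (a b : ℝ) : D1 (D1 (D2 FAL)) a b = 1 := by
  show deriv (fun x => D1 (D2 FAL) x b) a = _
  have : (fun x => D1 (D2 FAL) x b) = fun x => x + Real.exp b := by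
    funext x; exact d12 x b
  rw [this]
  simpa using ((hasDerivAt_id a).add_const (Real.exp b)).deriv

lemma c1_01 (a b : ℝ) : D1 (D2 (D2 FAL)) a b = Real.exp b := by
  show deriv (fun x => D2 (D2 FAL) x b) a = _
  have : (fun x => D2 (D2 FAL) x b) = fun x => x * Real.exp b := by
    funext x; exact d22 x b
  rw [this]
  simpa using ((hasDerivAt_id a).mul_const (Real.exp b)).deriv

lemma c1_10 (a b : ℝ) : D2 (D1 (D2 FAL)) a b = Real.exp b := by
  show deriv (fun y => D1 (D2 FAL) a y) b = _
  have : (fun y => D1 (D2 FAL) a y) = fun y => a + Real.exp y := by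
    funext y; exact d12 a y
  rw [this]
  simpa using ((Real.hasDerivAt_exp b).const_add a).deriv

lemma c1_11 (a b : ℝ) : D2 (D2 (D2 FAL)) a b = a * Real.exp b := by
  show deriv (fun y => D2 (D2 FAL) a y) b = _
  have : (fun y => D2 (D2 FAL) a y) = fun y => a * Real.exp y := by
    funext y; exact d22 a y
  rw [this]
  simpa using ((Real.hasDerivAt_exp b).const_mul a).deriv

lemma c2_00 (a b : ℝ) (ha : 0 < a) : D1 (D1 (D1 FAL)) a b = 1 / a := by
  show deriv (fun x => D1 (D1 FAL) x b) a = _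
  have hev : (fun x => D1 (D1 FAL) x b) =ᶠ[nhds a]
      (fun x => b + Real.log x + 3 / 2) := by
    filter_upwards [eventually_gt_nhds ha] with x hx using d11 x b hx
  rw [show deriv (fun x => D1 (D1 FAL) x b) a = deriv (fun x => b + Real.log x + 3 / 2) a from hev.deriv_eq]
  have h : HasDerivAt (fun x : ℝ => b + Real.log x + 3 / 2) (1 / a) a := by
    simpa [one_div] using ((Real.hasDerivAt_log ha.ne').const_add b).add_const (3 / 2 : ℝ)
  rw [h.deriv]

lemma c2_01 (a b : ℝ) (ha : 0 < a) : D1 (D2 (D1 FAL)) a b = 1 := by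
  show deriv (fun x => D2 (D1 FAL) x b) a = _
  have hev : (fun x => D2 (D1 FAL) x b) =ᶠ[nhds a] (fun x => x + Real.exp b) := by
    filter_upwards [eventually_gt_nhds ha] with x hx using d21 x b hx
  rw [show deriv (fun x => D2 (D1 FAL) x b) a = deriv (fun x => x + Real.exp b) a from hev.deriv_eq]
  simpa using ((hasDerivAt_id a).add_const (Real.exp b)).deriv

lemma c2_10 (a b : ℝ) (ha : 0 < a) : D2 (D1 (D1 FAL)) a b = 1 := by
  show deriv (fun y => D1 (D1 FAL) a y) b = _
  have : (fun y => D1 (D1 FAL) a y) = fun y => y + Real.log a + 3 / 2 := by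
    funext y; exact d11 a y ha
  rw [this]
  simpa using (((hasDerivAt_id b).add_const (Real.log a)).add_const (3 / 2 : ℝ)).deriv

lemma c2_11 (a b : ℝ) (ha : 0 < a) : D2 (D2 (D1 FAL)) a b = Real.exp b := by
  show deriv (fun y => D2 (D1 FAL) a y) b = _
  have : (fun y => D2 (D1 FAL) a y) = fun y => a + Real.exp y := by
    funext y; exact d21 a y ha
  rw [this]
  simpa using ((Real.hasDerivAt_exp b).const_add a).deriv

/-- On the domain `v¹ > 0`, `v¹ ≠ e^{v²}`, the vector field
`e = (v¹∂₁ − ∂₂)/(v¹ − e^{v²})` is the unit of the multiplication defined by the structure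
constants of `F = (1/2)(v¹)²v² + v¹e^{v²} + (1/2)(v¹)²log v¹`:
`e^γ c^α_{γβ} = δ^α_β`. -/
theorem eAL_is_unit (a b : ℝ) (ha : 0 < a) (hne : a ≠ Real.exp b) (α β : Fin 2) :
    ∑ γ : Fin 2, eAL γ a b * cAL α γ β a b = if α = β then 1 else 0 := by
  have hd : a - Real.exp b ≠ 0 := sub_ne_zero.mpr hne
  fin_cases α <;> fin_cases β <;>
    simp [Fin.sum_univ_two, eAL, cAL, Dv, swapIdx, c1_00, c1_01, c1_10, c1_11,
      c2_00 a b ha, c2_01 a b ha, c2_10 a b ha, c2_11 a b ha] <;>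
    field_simp <;> ring
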